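/- arXiv:0905.1879 — 2 statements merged into one kernel-verified Lean document; each statement's English description precedes it below -/
import Mathlib

section
/- Let C be an exact inverse category, f : A → B a morphism, u : X → A and v : Y → B monomorphisms. Then: (i) the image of f ∘ u is the subobject (Y, v) if and only if P(f)(u ∘ u*) = v ∘ v*; (ii) the inverse image of the subobject (Y, v) under f is (X, u) (i.e. the square obtained by pulling back v along f has left edge u) if and only if P′(f)(v ∘ v*) = u ∘ u*. -/
open CategoryTheory CategoryTheory.Limits

universe v u

/-- An operation assigning to each morphism a morphism in the opposite direction. -/
def MorphismOp (C : Type u) [Category.{v} C] : Type (max u v) :=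
  ∀ {A B : C}, (A ⟶ B) → (B ⟶ A)

variable {C : Type u} [Category.{v} C]

/-- `s` is an involution: a contravariant endofunctor which is the identity on objects
and involutive on morphisms. -/
def IsInvolution (s : MorphismOp C) : Prop :=
  (∀ {A B D : C} (f : A ⟶ B) (g : B ⟶ D), s (f ≫ g) = s g ≫ s f) ∧
  (∀ A : C, s (𝟙 A) = 𝟙 A) ∧
  (∀ {A B : C} (f : A ⟶ B), s (s f) = f)

/-- A projection on `A` is an idempotent endomorphism fixed by the involution `s`. -/
def IsProjection (s : MorphismOp C) {A : C} (i : A ⟶ A) : Prop :=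
  i ≫ i = i ∧ s i = i

/-- `g` is a Moore–Penrose generalized inverse of `f` with respect to `s`:
`f g f = f`, `g f g = g`, `(f g)* = f g`, `(g f)* = g f`. -/
def IsMoorePenrose (s : MorphismOp C) {A B : C} (f : A ⟶ B) (g : B ⟶ A) : Prop :=
  f ≫ g ≫ f = f ∧ g ≫ f ≫ g = g ∧ s (f ≫ g) = f ≫ g ∧ s (g ≫ f) = g ≫ f

/-- `inv` makes `C` an inverse category: each morphism `f` has `inv f` as its unique
generalized inverse (`f ∘ (inv f) ∘ f = f` and `(inv f) ∘ f ∘ (inv f) = inv f`). -/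
def IsInverseOp (inv : MorphismOp C) : Prop :=
  ∀ {A B : C} (f : A ⟶ B),
    (f ≫ inv f ≫ f = f ∧ inv f ≫ f ≫ inv f = inv f) ∧
    ∀ g : B ⟶ A, f ≫ g ≫ f = f → g ≫ f ≫ g = g → g = inv f

/-- `u` is a kernel of `f`. -/
def IsKernelOf [HasZeroMorphisms C] {K A B : C} (u : K ⟶ A) (f : A ⟶ B) : Prop :=
  u ≫ f = 0 ∧ ∀ {X : C} (g : X ⟶ A), g ≫ f = 0 → ∃! h : X ⟶ K, h ≫ u = g

/-- `v` is a cokernel of `f`. -/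
def IsCokernelOf [HasZeroMorphisms C] {A B Q : C} (v : B ⟶ Q) (f : A ⟶ B) : Prop :=
  f ≫ v = 0 ∧ ∀ {X : C} (g : B ⟶ X), f ≫ g = 0 → ∃! h : Q ⟶ X, v ≫ h = g

/-- An exact category (in the sense of the paper): a category with a zero object,
kernels and cokernels, in which every monomorphism is a kernel, every epimorphism is a
cokernel, and every morphism factors as a monomorphism composed with an epimorphism. -/
structure IsExactCategory (C : Type u) [Category.{v} C] [HasZeroObject C]
    [HasZeroMorphisms C] : Prop where
  hasKernels : ∀ {A B : C} (f : A ⟶ B), ∃ (K : C) (u : K ⟶ A), IsKernelOf u f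
  hasCokernels : ∀ {A B : C} (f : A ⟶ B), ∃ (Q : C) (v : B ⟶ Q), IsCokernelOf v f
  normal : ∀ {X A : C} (u : X ⟶ A), Mono u → ∃ (B : C) (f : A ⟶ B), IsKernelOf u f
  conormal : ∀ {A B : C} (v : A ⟶ B), Epi v → ∃ (X : C) (f : X ⟶ A), IsCokernelOf v f
  monoEpiFact : ∀ {A B : C} (f : A ⟶ B),
    ∃ (I : C) (q : A ⟶ I) (p : I ⟶ B), Epi q ∧ Mono p ∧ q ≫ p = f

/-- A Baer*-structure on `C` with respect to `s`: each morphism `f` has a projection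
`f′ = prj f` on its domain with `f ∘ g = 0` iff `g` factors through `f′`. -/
structure BaerStar (C : Type u) [Category.{v} C] [HasZeroObject C] [HasZeroMorphisms C]
    (s : MorphismOp C) where
  prj : ∀ {A B : C}, (A ⟶ B) → (A ⟶ A)
  prj_isProjection : ∀ {A B : C} (f : A ⟶ B), IsProjection s (prj f)
  prj_spec : ∀ {A B X : C} (f : A ⟶ B) (g : X ⟶ A),
    g ≫ f = 0 ↔ ∃ h : X ⟶ A, g = h ≫ prj f

/-- The natural partial order on projections: `e ≤ f` iff `e = e ∘ f`. -/
def ProjLe {A : C} (e f : A ⟶ A) : Prop := f ≫ e = e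

/-- `p` is the image of `g`: the smallest subobject of the codomain of `g` through
which `g` factors. -/
def IsImageOf {A B I : C} (p : I ⟶ B) (g : A ⟶ B) : Prop :=
  Mono p ∧ (∃ t : A ⟶ I, t ≫ p = g) ∧
  ∀ {S : C} (t : A ⟶ S) (m : S ⟶ B), Mono m → t ≫ m = g → ∃ w : I ⟶ S, w ≫ m = p


section Stmt13Aux

variable (σ : MorphismOp C)

lemma inv_tri1 (h : IsInverseOp σ) {A B : C} (f : A ⟶ B) : f ≫ σ f ≫ f = f := (h f).1.1

lemma inv_tri2 (h : IsInverseOp σ) {A B : C} (f : A ⟶ B) : σ f ≫ f ≫ σ f = σ f := (h f).1.2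

lemma inv_uniq (h : IsInverseOp σ) {A B : C} (f : A ⟶ B) (g : B ⟶ A)
    (h1 : f ≫ g ≫ f = f) (h2 : g ≫ f ≫ g = g) : g = σ f := (h f).2 g h1 h2

lemma op_op (h : IsInverseOp σ) {A B : C} (f : A ⟶ B) : σ (σ f) = f :=
  (inv_uniq σ h (σ f) f (inv_tri2 σ h f) (inv_tri1 σ h f)).symm

lemma idem_op (h : IsInverseOp σ) {A : C} {e : A ⟶ A} (he : e ≫ e = e) : σ e = e :=
  (inv_uniq σ h e e (by rw [he, he]) (by rw [he, he])).symm

lemma idem_comp_idem (h : IsInverseOp σ) {A : C} {e f : A ⟶ A}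
    (he : e ≫ e = e) (hf : f ≫ f = f) :
    ((e ≫ f) ≫ (e ≫ f) = e ≫ f) ∧ σ (e ≫ f) = e ≫ f := by
  have he' := reassoc_of% he
  have hf' := reassoc_of% hf
  have t1 : e ≫ f ≫ σ (e ≫ f) ≫ e ≫ f = e ≫ f := by
    have := inv_tri1 σ h (e ≫ f); simpa only [Category.assoc] using this
  have t2 : σ (e ≫ f) ≫ e ≫ f ≫ σ (e ≫ f) = σ (e ≫ f) := by
    have := inv_tri2 σ h (e ≫ f); simpa only [Category.assoc] using this
  have t2x := reassoc_of% t2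
  have key : f ≫ σ (e ≫ f) ≫ e = σ (e ≫ f) := by
    apply inv_uniq σ h (e ≫ f) (f ≫ σ (e ≫ f) ≫ e)
    · simp only [Category.assoc]
      rw [hf', he']
      exact t1
    · simp only [Category.assoc]
      rw [he', hf', t2x]
  have gidem : σ (e ≫ f) ≫ σ (e ≫ f) = σ (e ≫ f) := by
    conv_lhs => rw [← key]
    simp only [Category.assoc]
    rw [t2x]
    simpa only [Category.assoc] using key
  have hef : e ≫ f = σ (e ≫ f) := by
    conv_lhs => rw [← op_op σ h (e ≫ f)]
    rw [idem_op σ h gidem]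
  refine ⟨?_, hef.symm⟩
  rw [hef]; exact gidem

lemma idem_comm (h : IsInverseOp σ) {A : C} {e f : A ⟶ A}
    (he : e ≫ e = e) (hf : f ≫ f = f) : e ≫ f = f ≫ e := by
  have he' := reassoc_of% he
  have hf' := reassoc_of% hf
  have i1 : e ≫ f ≫ e ≫ f = e ≫ f := by
    have := (idem_comp_idem σ h he hf).1; simpa only [Category.assoc] using this
  have i2 : f ≫ e ≫ f ≫ e = f ≫ e := by
    have := (idem_comp_idem σ h hf he).1; simpa only [Category.assoc] using this
  have key : f ≫ e = σ (e ≫ f) := by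
    apply inv_uniq σ h (e ≫ f) (f ≫ e)
    · simp only [Category.assoc]
      rw [hf', he']
      exact i1
    · simp only [Category.assoc]
      rw [he', hf']
      exact i2
  rw [(idem_comp_idem σ h he hf).2] at key
  exact key.symm

lemma op_comp (h : IsInverseOp σ) {A B D : C} (f : A ⟶ B) (g : B ⟶ D) :
    σ (f ≫ g) = σ g ≫ σ f := by
  have idem1 : (g ≫ σ g) ≫ (g ≫ σ g) = g ≫ σ g := by
    simp only [Category.assoc]; rw [reassoc_of% (inv_tri1 σ h g)]
  have idem2 : (σ f ≫ f) ≫ (σ f ≫ f) = σ f ≫ f := by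
    simp only [Category.assoc]; rw [reassoc_of% (inv_tri2 σ h f)]
  have comm := idem_comm σ h idem1 idem2
  have commn : g ≫ σ g ≫ σ f ≫ f = σ f ≫ f ≫ g ≫ σ g := by
    simpa only [Category.assoc] using comm
  refine (inv_uniq σ h (f ≫ g) (σ g ≫ σ f) ?_ ?_).symm
  · simp only [Category.assoc]
    rw [reassoc_of% commn, reassoc_of% (inv_tri1 σ h f), inv_tri1 σ h g]
  · simp only [Category.assoc]
    rw [reassoc_of% commn.symm, reassoc_of% (inv_tri2 σ h g), inv_tri2 σ h f]

lemma op_zero [HasZeroMorphisms C] (h : IsInverseOp σ) {A B : C} :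
    σ (0 : A ⟶ B) = 0 :=
  (inv_uniq σ h 0 0 (by simp) (by simp)).symm

lemma mono_comp_op (h : IsInverseOp σ) {X A : C} (u : X ⟶ A) (hu : Mono u) :
    u ≫ σ u = 𝟙 X := by
  have := hu
  have h1 : (u ≫ σ u) ≫ u = 𝟙 X ≫ u := by
    rw [Category.assoc, inv_tri1 σ h u, Category.id_comp]
  exact (cancel_mono u).mp h1

lemma epi_op_comp (h : IsInverseOp σ) {A B : C} (q : A ⟶ B) (hq : Epi q) :
    σ q ≫ q = 𝟙 B := by
  have := hq
  have h1 : q ≫ σ q ≫ q = q ≫ 𝟙 B := by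
    rw [inv_tri1 σ h q, Category.comp_id]
  exact (cancel_epi q).mp h1

end Stmt13Aux

section Stmt13Aux2

variable (σ : MorphismOp C) [HasZeroObject C] [HasZeroMorphisms C]

lemma proj_factor (h : IsInverseOp σ) (hC : IsExactCategory C) {A : C} (e : A ⟶ A)
    (he : e ≫ e = e) :
    ∃ (I : C) (p : I ⟶ A), Mono p ∧ Epi (σ p) ∧ σ p ≫ p = e := by
  obtain ⟨I, q, p, hq, hp, hqp⟩ := hC.monoEpiFact e
  have h1 : q ≫ (p ≫ q) ≫ p = q ≫ 𝟙 I ≫ p := by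
    simp only [Category.assoc, Category.id_comp]
    have h0 : (q ≫ p) ≫ q ≫ p = q ≫ p := by rw [hqp]; exact he
    simpa only [Category.assoc] using h0
  have h2 := (cancel_epi q).mp h1
  have hpq : p ≫ q = 𝟙 I := (cancel_mono p).mp h2
  have hq_eq : q = σ p := by
    apply inv_uniq σ h p q
    · rw [← Category.assoc, hpq, Category.id_comp]
    · rw [hpq, Category.comp_id]
  exact ⟨I, p, hp, hq_eq ▸ hq, by rw [← hq_eq, hqp]⟩

lemma prj_comp (Bs : BaerStar C σ) {A B : C} (f : A ⟶ B) : Bs.prj f ≫ f = 0 :=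
  (Bs.prj_spec f (Bs.prj f)).mpr ⟨𝟙 A, (Category.id_comp _).symm⟩

lemma absorb (Bs : BaerStar C σ) {T A B : C} (f : A ⟶ B) (g : T ⟶ A) (hg : g ≫ f = 0) :
    g ≫ Bs.prj f = g := by
  obtain ⟨h', hh⟩ := (Bs.prj_spec f g).mp hg
  rw [hh, Category.assoc, (Bs.prj_isProjection f).1]

lemma op_prj (h : IsInverseOp σ) (Bs : BaerStar C σ) {A B : C} (f : A ⟶ B) :
    σ f ≫ Bs.prj f = 0 := by
  have h0 : σ (Bs.prj f ≫ f) = 0 := by rw [prj_comp, op_zero σ h]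
  rw [op_comp σ h] at h0
  rw [← (Bs.prj_isProjection f).2]
  exact h0

lemma prj_unique (h : IsInverseOp σ) (Bs : BaerStar C σ) {A B : C} (f : A ⟶ B) (e : A ⟶ A)
    (he : e ≫ e = e) (hse : σ e = e)
    (hspec : ∀ {T : C} (g : T ⟶ A), g ≫ f = 0 ↔ ∃ h' : T ⟶ A, g = h' ≫ e) :
    Bs.prj f = e := by
  have hef : e ≫ f = 0 := (hspec e).mpr ⟨e, he.symm⟩
  obtain ⟨a, ha⟩ := (hspec (Bs.prj f)).mp (prj_comp σ Bs f)
  have P1 : Bs.prj f ≫ e = Bs.prj f := by rw [ha, Category.assoc, he]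
  have P2 : e ≫ Bs.prj f = e := absorb σ Bs f e hef
  have P3 : Bs.prj f ≫ e = e := by
    have h4 := congrArg (fun x : A ⟶ A => σ x) P2
    simp only [op_comp σ h, hse, (Bs.prj_isProjection f).2] at h4
    exact h4
  exact P1.symm.trans P3

lemma prj_prj (h : IsInverseOp σ) (hC : IsExactCategory C) (Bs : BaerStar C σ)
    {A B : C} (f : A ⟶ B) : Bs.prj (Bs.prj f) = f ≫ σ f := by
  apply prj_unique σ h Bs
  · simp only [Category.assoc]; rw [reassoc_of% (inv_tri1 σ h f)]
  · rw [op_comp σ h, op_op σ h]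
  · intro T g
    constructor
    · intro hg
      obtain ⟨I0, q0, p0, hq0, hp0, hf0⟩ := hC.monoEpiFact f
      obtain ⟨I, p, hmp, hep, hpe⟩ := proj_factor σ h hC (Bs.prj f) (Bs.prj_isProjection f).1
      have h1 : g ≫ σ p = 0 := by
        apply (cancel_mono p).mp
        rw [zero_comp, Category.assoc, hpe]
        exact hg
      have h2 : p ≫ σ g = 0 := by
        have h4 := congrArg (fun x : T ⟶ I => σ x) h1
        simpa only [op_comp σ h, op_op σ h, op_zero σ h] using h4
      have hpp : p ≫ Bs.prj f = p := by
        rw [← hpe, ← Category.assoc, mono_comp_op σ h p hmp, Category.id_comp]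
      have h3 : p ≫ f = 0 := by
        rw [← hpp, Category.assoc, prj_comp σ Bs f, comp_zero]
      obtain ⟨Z, m, hm⟩ := hC.conormal q0 hq0
      have h5 : m ≫ f = 0 := by rw [← hf0, ← Category.assoc, hm.1, zero_comp]
      have hma : m ≫ Bs.prj f = m := absorb σ Bs f m h5
      have h7 : m ≫ σ g = 0 := by
        calc m ≫ σ g = (m ≫ Bs.prj f) ≫ σ g := by rw [hma]
          _ = m ≫ σ p ≫ p ≫ σ g := by rw [← hpe]; simp only [Category.assoc]
          _ = 0 := by rw [h2, comp_zero, comp_zero]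
      obtain ⟨b, hb, -⟩ := hm.2 (σ g) h7
      have hg' : σ b ≫ σ q0 = g := by
        have h8 := congrArg (fun x => σ x) hb
        simpa only [op_comp σ h, op_op σ h] using h8
      have h9 : g ≫ f ≫ σ f = g := by
        calc g ≫ f ≫ σ f
            = σ b ≫ σ q0 ≫ f ≫ σ f := by rw [← hg']; simp only [Category.assoc]
          _ = σ b ≫ σ q0 ≫ q0 ≫ p0 ≫ σ p0 ≫ σ q0 := by
              rw [← hf0, op_comp σ h]; simp only [Category.assoc]
          _ = σ b ≫ σ q0 ≫ q0 ≫ σ q0 := by rw [reassoc_of% (mono_comp_op σ h p0 hp0)]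
          _ = σ b ≫ σ q0 := by rw [inv_tri2 σ h q0]
          _ = g := hg'
      exact ⟨g, h9.symm⟩
    · rintro ⟨h', rfl⟩
      simp only [Category.assoc]
      rw [op_prj σ h Bs f, comp_zero, comp_zero]

end Stmt13Aux2

section Stmt13Aux3

variable (σ : MorphismOp C) [HasZeroObject C] [HasZeroMorphisms C]

lemma factor_iff (h : IsInverseOp σ) (hC : IsExactCategory C) (Bs : BaerStar C σ)
    {Y B T : C} (v : Y ⟶ B) (g : T ⟶ B) :
    g ≫ Bs.prj (σ v ≫ v) = 0 ↔ ∃ g' : T ⟶ Y, g' ≫ v = g := by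
  have hjj : Bs.prj (Bs.prj (σ v ≫ v)) = σ v ≫ v := by
    rw [prj_prj σ h hC Bs, op_comp σ h, op_op σ h]
    simp only [Category.assoc]
    rw [inv_tri1 σ h v]
  constructor
  · intro hg
    obtain ⟨a, ha⟩ := (Bs.prj_spec _ g).mp hg
    rw [hjj] at ha
    exact ⟨a ≫ σ v, by rw [ha]; simp only [Category.assoc]⟩
  · rintro ⟨g', rfl⟩
    refine (Bs.prj_spec _ _).mpr ⟨g' ≫ v, ?_⟩
    rw [hjj]
    simp only [Category.assoc]
    rw [inv_tri1 σ h v]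

lemma image_iff (h : IsInverseOp σ) (hC : IsExactCategory C)
    {A B Y : C} (g : A ⟶ B) (v : Y ⟶ B) (hv : Mono v) :
    IsImageOf v g ↔ σ g ≫ g = σ v ≫ v := by
  constructor
  · rintro ⟨-, ⟨t, ht⟩, hmin⟩
    obtain ⟨I, q, p, hq, hp, hqp⟩ := hC.monoEpiFact g
    have h1 : σ g ≫ g = σ p ≫ p := by
      rw [← hqp, op_comp σ h]
      simp only [Category.assoc]
      rw [reassoc_of% (epi_op_comp σ h q hq)]
    obtain ⟨w, hw⟩ := hmin q p hp hqp
    obtain ⟨D, h', hker⟩ := hC.normal v hv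
    have h2 : p ≫ h' = 0 := by
      apply (cancel_epi q).mp
      rw [← Category.assoc, hqp, comp_zero, ← ht, Category.assoc, hker.1, comp_zero]
    obtain ⟨w', hw', -⟩ := hker.2 p h2
    have hA : v ≫ σ p ≫ p = v := by
      conv_lhs => rw [← hw]
      simp only [Category.assoc]
      rw [reassoc_of% (mono_comp_op σ h p hp), hw]
    have hB : p ≫ σ v ≫ v = p := by
      conv_lhs => rw [← hw']
      simp only [Category.assoc]
      rw [reassoc_of% (mono_comp_op σ h v hv), hw']
    have hA' : σ v ≫ v ≫ σ p ≫ p = σ v ≫ v := by rw [hA]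
    have hB' : σ p ≫ p ≫ σ v ≫ v = σ p ≫ p := by rw [hB]
    have hA'' : σ p ≫ p ≫ σ v ≫ v = σ v ≫ v := by
      have h4 := congrArg (fun x : B ⟶ B => σ x) hA'
      simpa only [op_comp σ h, op_op σ h, Category.assoc] using h4
    rw [h1]
    exact hB'.symm.trans hA''
  · intro E
    refine ⟨hv, ⟨g ≫ σ v, ?_⟩, ?_⟩
    · simp only [Category.assoc]
      rw [← E]
      exact inv_tri1 σ h g
    · intro S t' m hm ht'
      refine ⟨v ≫ σ m, ?_⟩
      have hv2 : v ≫ σ g ≫ g = v := by rw [E]; exact inv_tri1 σ h v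
      have hv3 : v ≫ σ m ≫ σ t' ≫ t' ≫ m = v := by
        rw [← ht', op_comp σ h] at hv2
        simpa only [Category.assoc] using hv2
      conv_lhs => rw [← hv3]
      simp only [Category.assoc]
      rw [inv_tri1 σ h m]
      exact hv3

end Stmt13Aux3


/-- In an exact inverse category with monos `u : X ⟶ A`, `v : Y ⟶ B`
and `f : A ⟶ B`: (i) `v` is the image of `f ∘ u` iff `P(f)(u ∘ u*) = v ∘ v*`; (ii) `u` is
the left edge of the pullback of `v` along `f` iff `P′(f)(v ∘ v*) = u ∘ u*`. -/
theorem stmt13 [HasZeroObject C] [HasZeroMorphisms C] (inv : MorphismOp C)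
    (hinv : IsInverseOp inv) (hC : IsExactCategory C) (Bs : BaerStar C inv)
    {X Y A B : C} (f : A ⟶ B) (u : X ⟶ A) (hu : Mono u) (v : Y ⟶ B) (hv : Mono v) :
    (IsImageOf v (u ≫ f) ↔ inv f ≫ (inv u ≫ u) ≫ f = inv v ≫ v) ∧
    ((∃ t : X ⟶ Y, IsPullback t u v f) ↔
      Bs.prj (f ≫ Bs.prj (inv v ≫ v)) = inv u ≫ u) := by
  constructor
  · -- Part (i)
    have hrw : inv (u ≫ f) ≫ u ≫ f = inv f ≫ (inv u ≫ u) ≫ f := by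
      rw [op_comp inv hinv]; simp only [Category.assoc]
    rw [← hrw]
    exact image_iff inv hinv hC (u ≫ f) v hv
  · constructor
    · rintro ⟨t, hpb⟩
      apply prj_unique inv hinv Bs
      · simp only [Category.assoc]
        rw [inv_tri1 inv hinv u]
      · rw [op_comp inv hinv, op_op inv hinv]
      · intro T g
        constructor
        · intro hg
          have hg' : (g ≫ f) ≫ Bs.prj (inv v ≫ v) = 0 := by
            simpa only [Category.assoc] using hg
          obtain ⟨g', hg'v⟩ := (factor_iff inv hinv hC Bs v (g ≫ f)).mp hg'
          have hl : hpb.lift g' g hg'v ≫ u = g := hpb.lift_snd g' g hg'v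
          refine ⟨g, ?_⟩
          conv_rhs => rw [← hl]
          simp only [Category.assoc]
          rw [reassoc_of% (mono_comp_op inv hinv u hu)]
          exact hl.symm
        · rintro ⟨a, rfl⟩
          have h0 : ((a ≫ inv u ≫ u) ≫ f) ≫ Bs.prj (inv v ≫ v) = 0 := by
            apply (factor_iff inv hinv hC Bs v _).mpr
            refine ⟨a ≫ inv u ≫ t, ?_⟩
            simp only [Category.assoc]
            rw [hpb.w]
          simpa only [Category.assoc] using h0
    · intro heq
      have h1 : u ≫ Bs.prj (f ≫ Bs.prj (inv v ≫ v)) = u := by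
        rw [heq, ← Category.assoc, mono_comp_op inv hinv u hu, Category.id_comp]
      have hu0 : (u ≫ f) ≫ Bs.prj (inv v ≫ v) = 0 := by
        have h2 : u ≫ f ≫ Bs.prj (inv v ≫ v) = 0 := by
          conv_lhs => rw [← h1]
          rw [Category.assoc, prj_comp inv Bs (f ≫ Bs.prj (inv v ≫ v)), comp_zero]
        simpa only [Category.assoc] using h2
      obtain ⟨s, hs⟩ := (factor_iff inv hinv hC Bs v (u ≫ f)).mp hu0
      have comm : (u ≫ f ≫ inv v) ≫ v = u ≫ f := by
        have h3 : (u ≫ f) ≫ inv v ≫ v = u ≫ f := by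
          conv_lhs => rw [← hs]
          simp only [Category.assoc]
          rw [inv_tri1 inv hinv v]
          exact hs
        simpa only [Category.assoc] using h3
      have key : ∀ s' : PullbackCone v f, s'.snd ≫ inv u ≫ u = s'.snd := by
        intro s'
        have hc : (s'.snd ≫ f) ≫ Bs.prj (inv v ≫ v) = 0 :=
          (factor_iff inv hinv hC Bs v _).mpr ⟨s'.fst, s'.condition⟩
        have hc' : s'.snd ≫ Bs.prj (f ≫ Bs.prj (inv v ≫ v)) = s'.snd := by
          apply absorb
          simpa only [Category.assoc] using hc
        rw [heq] at hc'
        simpa only [Category.assoc] using hc'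
      refine ⟨u ≫ f ≫ inv v, IsPullback.of_isLimit' ⟨comm⟩ ?_⟩
      refine PullbackCone.IsLimit.mk comm (fun s' => s'.snd ≫ inv u) ?_ ?_ ?_
      · intro s'
        have h4 : (s'.snd ≫ inv u) ≫ u ≫ f ≫ inv v = s'.snd ≫ f ≫ inv v := by
          simp only [Category.assoc]
          rw [reassoc_of% (key s')]
        rw [h4, ← Category.assoc, ← s'.condition, Category.assoc,
          mono_comp_op inv hinv v hv, Category.comp_id]
      · intro s'
        rw [Category.assoc]
        exact key s'
      · intro s' m hm1 hm2
        show m = s'.snd ≫ inv u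
        rw [← hm2, Category.assoc, mono_comp_op inv hinv u hu, Category.comp_id]
end

section
/- Let C be an exact inverse category and f : A → B a morphism of C. Then P′(f) = P(f*) (as functions P(B) → P(A)) if and only if f is a monomorphism, and P(f) = P′(f*) (as functions P(A) → P(B)) if and only if f is an epimorphism. -/
open CategoryTheory CategoryTheory.Limits

universe v u

variable {C : Type u} [Category.{v} C]

section Aux

variable {inv : MorphismOp C}

lemma my_gi_eq (hinv : IsInverseOp inv) {A B : C} (f : A ⟶ B) (g : B ⟶ A)
    (h1 : f ≫ g ≫ f = f) (h2 : g ≫ f ≫ g = g) : g = inv f :=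
  (hinv f).2 g h1 h2

lemma my_inv_inv (hinv : IsInverseOp inv) {A B : C} (f : A ⟶ B) : inv (inv f) = f :=
  (my_gi_eq hinv (inv f) f (hinv f).1.2 (hinv f).1.1).symm

lemma my_idem_inv (hinv : IsInverseOp inv) {A : C} {e : A ⟶ A} (he : e ≫ e = e) :
    inv e = e :=
  (my_gi_eq hinv e e (by rw [he, he]) (by rw [he, he])).symm

lemma my_inv_id (hinv : IsInverseOp inv) (A : C) : inv (𝟙 A) = 𝟙 A :=
  my_idem_inv hinv (Category.id_comp _)

lemma my_idem_comp (hinv : IsInverseOp inv) {A : C} {a b : A ⟶ A}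
    (ha : a ≫ a = a) (hb : b ≫ b = b) : (a ≫ b) ≫ (a ≫ b) = a ≫ b := by
  set c := inv (a ≫ b) with hc
  have hc1 : a ≫ b ≫ c ≫ a ≫ b = a ≫ b := by
    simpa only [Category.assoc] using (hinv (a ≫ b)).1.1
  have hc2 : c ≫ a ≫ b ≫ c = c := by
    simpa only [Category.assoc] using (hinv (a ≫ b)).1.2
  have key : b ≫ c ≫ a = c := by
    apply my_gi_eq hinv (a ≫ b) (b ≫ c ≫ a)
    · simp only [Category.assoc, reassoc_of% ha, reassoc_of% hb]
      exact hc1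
    · simp only [Category.assoc, reassoc_of% ha, reassoc_of% hb]
      rw [reassoc_of% hc2]
  have hbb : c ≫ c = c := by
    conv_lhs => rw [← key]
    simp only [Category.assoc]
    rw [reassoc_of% hc2]
    exact key
  have hab : a ≫ b = c :=
    ((my_inv_inv hinv (a ≫ b)).symm.trans (my_idem_inv hinv hbb))
  rw [hab]; exact hbb

lemma my_idem_comm (hinv : IsInverseOp inv) {A : C} {a b : A ⟶ A}
    (ha : a ≫ a = a) (hb : b ≫ b = b) : a ≫ b = b ≫ a := by
  have hab := my_idem_comp hinv ha hb
  have hba := my_idem_comp hinv hb ha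
  have key : b ≫ a = inv (a ≫ b) := by
    apply my_gi_eq hinv
    · simp only [Category.assoc, reassoc_of% ha, reassoc_of% hb]
      simpa only [Category.assoc] using hab
    · simp only [Category.assoc, reassoc_of% ha, reassoc_of% hb]
      simpa only [Category.assoc] using hba
  rw [key, my_idem_inv hinv hab]

lemma my_idem_fi (hinv : IsInverseOp inv) {A B : C} (f : A ⟶ B) :
    (f ≫ inv f) ≫ (f ≫ inv f) = f ≫ inv f := by
  simpa only [Category.assoc] using congrArg (· ≫ inv f) (hinv f).1.1

lemma my_idem_if (hinv : IsInverseOp inv) {A B : C} (f : A ⟶ B) :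
    (inv f ≫ f) ≫ (inv f ≫ f) = inv f ≫ f := by
  simpa only [Category.assoc] using congrArg (· ≫ f) (hinv f).1.2

lemma my_inv_comp (hinv : IsInverseOp inv) {A B D : C} (f : A ⟶ B) (g : B ⟶ D) :
    inv (f ≫ g) = inv g ≫ inv f := by
  have hf1 : f ≫ inv f ≫ f = f := (hinv f).1.1
  have hg1 : g ≫ inv g ≫ g = g := (hinv g).1.1
  have hf2 : inv f ≫ f ≫ inv f = inv f := (hinv f).1.2
  have hg2 : inv g ≫ g ≫ inv g = inv g := (hinv g).1.2
  symm
  apply my_gi_eq hinv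
  · calc (f ≫ g) ≫ (inv g ≫ inv f) ≫ (f ≫ g)
        = f ≫ ((g ≫ inv g) ≫ (inv f ≫ f)) ≫ g := by simp only [Category.assoc]
      _ = f ≫ ((inv f ≫ f) ≫ (g ≫ inv g)) ≫ g := by
          rw [my_idem_comm hinv (my_idem_fi hinv g) (my_idem_if hinv f)]
      _ = (f ≫ inv f ≫ f) ≫ (g ≫ inv g ≫ g) := by simp only [Category.assoc]
      _ = f ≫ g := by rw [hf1, hg1]
  · calc (inv g ≫ inv f) ≫ (f ≫ g) ≫ (inv g ≫ inv f)
        = inv g ≫ ((inv f ≫ f) ≫ (g ≫ inv g)) ≫ inv f := by simp only [Category.assoc]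
      _ = inv g ≫ ((g ≫ inv g) ≫ (inv f ≫ f)) ≫ inv f := by
          rw [my_idem_comm hinv (my_idem_fi hinv g) (my_idem_if hinv f)]
      _ = (inv g ≫ g ≫ inv g) ≫ (inv f ≫ f ≫ inv f) := by simp only [Category.assoc]
      _ = inv g ≫ inv f := by rw [hf2, hg2]

lemma my_proj_conj (hinv : IsInverseOp inv) {A B : C} (f : A ⟶ B) {j : B ⟶ B}
    (hj : IsProjection inv j) : IsProjection inv (f ≫ j ≫ inv f) := by
  have hff : f ≫ inv f ≫ f = f := (hinv f).1.1
  have hj2 : inv j = j := hj.2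
  constructor
  · calc (f ≫ j ≫ inv f) ≫ (f ≫ j ≫ inv f)
        = f ≫ (j ≫ (inv f ≫ f)) ≫ j ≫ inv f := by simp only [Category.assoc]
      _ = f ≫ ((inv f ≫ f) ≫ j) ≫ j ≫ inv f := by
          rw [my_idem_comm hinv hj.1 (my_idem_if hinv f)]
      _ = (f ≫ inv f ≫ f) ≫ (j ≫ j) ≫ inv f := by simp only [Category.assoc]
      _ = f ≫ j ≫ inv f := by rw [hff, hj.1]
  · show inv (f ≫ j ≫ inv f) = f ≫ j ≫ inv f
    rw [my_inv_comp hinv f (j ≫ inv f), my_inv_comp hinv j (inv f),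
      my_inv_inv hinv f, hj2, Category.assoc]

section Baer

variable [HasZeroObject C] [HasZeroMorphisms C]

lemma my_inv_zero (hinv : IsInverseOp inv) (A B : C) : inv (0 : A ⟶ B) = 0 :=
  (my_gi_eq hinv 0 0 (by simp) (by simp)).symm

lemma my_prj_comp_zero (Bs : BaerStar C inv) {A B : C} (F : A ⟶ B) :
    Bs.prj F ≫ F = 0 :=
  (Bs.prj_spec F (Bs.prj F)).2 ⟨𝟙 _, (Category.id_comp _).symm⟩

lemma my_comp_prj (Bs : BaerStar C inv) {A B X : C} {F : A ⟶ B} {x : X ⟶ A}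
    (hx : x ≫ F = 0) : x ≫ Bs.prj F = x := by
  obtain ⟨h, rfl⟩ := (Bs.prj_spec F x).1 hx
  rw [Category.assoc, (Bs.prj_isProjection F).1]

lemma my_prj_unique (hinv : IsInverseOp inv) (Bs : BaerStar C inv) {A B : C}
    (F : A ⟶ B) {e : A ⟶ A} (he : IsProjection inv e) (h0 : e ≫ F = 0)
    (hmax : ∀ {X : C} (x : X ⟶ A), x ≫ F = 0 → x ≫ e = x) : e = Bs.prj F := by
  have h1 : e ≫ Bs.prj F = e := my_comp_prj Bs h0
  have h2 : Bs.prj F ≫ e = Bs.prj F := hmax _ (my_prj_comp_zero Bs F)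
  have hF2 : inv (Bs.prj F) = Bs.prj F := (Bs.prj_isProjection F).2
  have he2 : inv e = e := he.2
  calc e = inv e := he2.symm
    _ = inv (e ≫ Bs.prj F) := by rw [h1]
    _ = inv (Bs.prj F) ≫ inv e := my_inv_comp hinv _ _
    _ = Bs.prj F ≫ e := by rw [hF2, he2]
    _ = Bs.prj F := h2

lemma my_prj_id (hinv : IsInverseOp inv) (Bs : BaerStar C inv) (B : C) :
    Bs.prj (𝟙 B) = (0 : B ⟶ B) := by
  symm
  apply my_prj_unique hinv Bs (𝟙 B) ⟨by simp, my_inv_zero hinv B B⟩ (by simp)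
  intro X x hx
  rw [Category.comp_id] at hx
  rw [hx, zero_comp]

lemma my_prj_zero (hinv : IsInverseOp inv) (Bs : BaerStar C inv) (A B : C) :
    Bs.prj (0 : A ⟶ B) = 𝟙 A := by
  symm
  apply my_prj_unique hinv Bs (0 : A ⟶ B) ⟨by simp, my_inv_id hinv A⟩ (by simp)
  intro X x _
  rw [Category.comp_id]

lemma my_mono_iff (hinv : IsInverseOp inv) {A B : C} (f : A ⟶ B) :
    Mono f ↔ f ≫ inv f = 𝟙 A := by
  constructor
  · intro hm
    have hf1 : f ≫ inv f ≫ f = f := (hinv f).1.1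
    have h : (f ≫ inv f) ≫ f = 𝟙 A ≫ f := by
      rw [Category.id_comp, Category.assoc, hf1]
    exact (cancel_mono f).1 h
  · intro h
    refine ⟨fun g g' w => ?_⟩
    calc g = g ≫ f ≫ inv f := by rw [h, Category.comp_id]
      _ = (g ≫ f) ≫ inv f := by rw [Category.assoc]
      _ = (g' ≫ f) ≫ inv f := by rw [w]
      _ = g' := by rw [Category.assoc, h, Category.comp_id]

lemma my_epi_iff (hinv : IsInverseOp inv) {A B : C} (f : A ⟶ B) :
    Epi f ↔ inv f ≫ f = 𝟙 B := by
  constructor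
  · intro he
    have hf1 : f ≫ inv f ≫ f = f := (hinv f).1.1
    have h : f ≫ inv f ≫ f = f ≫ 𝟙 B := by rw [Category.comp_id, hf1]
    exact (cancel_epi f).1 h
  · intro h
    refine ⟨fun g g' w => ?_⟩
    calc g = (inv f ≫ f) ≫ g := by rw [h, Category.id_comp]
      _ = inv f ≫ f ≫ g := by rw [Category.assoc]
      _ = inv f ≫ f ≫ g' := by rw [w]
      _ = g' := by rw [← Category.assoc, h, Category.id_comp]

lemma my_compl (hinv : IsInverseOp inv) (hC : IsExactCategory C)
    (Bs : BaerStar C inv) {B X : C} {j : B ⟶ B} (hj : IsProjection inv j)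
    (x : X ⟶ B) (hx : x ≫ Bs.prj j = 0) : x ≫ j = x := by
  obtain ⟨I, q, p, hq, hp, hqp⟩ := hC.monoEpiFact j
  haveI := hq; haveI := hp
  have h1 : (q ≫ p) ≫ (q ≫ p) = q ≫ p := by rw [hqp]; exact hj.1
  have hpq : p ≫ q = 𝟙 I := by
    have h2 : q ≫ (p ≫ q) ≫ p = q ≫ 𝟙 I ≫ p := by
      rw [Category.id_comp]
      simpa only [Category.assoc] using h1
    have h3 : (p ≫ q) ≫ p = 𝟙 I ≫ p := (cancel_epi q).1 h2
    exact (cancel_mono p).1 h3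
  have hpinv : p = inv q :=
    my_gi_eq hinv q p (by rw [hpq, Category.comp_id])
      (by rw [← Category.assoc, hpq, Category.id_comp])
  obtain ⟨K, u, hu⟩ := hC.hasKernels j
  have hu_prj : u ≫ Bs.prj j = u := my_comp_prj Bs hu.1
  have hprj2 : inv (Bs.prj j) = Bs.prj j := (Bs.prj_isProjection j).2
  have h5 : Bs.prj j ≫ inv x = 0 := by
    have h : inv (x ≫ Bs.prj j) = inv (0 : X ⟶ B) := by rw [hx]
    rw [my_inv_comp hinv, my_inv_zero hinv, hprj2] at h
    exact h
  have h6 : u ≫ inv x = 0 := by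
    rw [← hu_prj, Category.assoc, h5, comp_zero]
  obtain ⟨Y, g, hg⟩ := hC.conormal q hq
  have hgj : g ≫ j = 0 := by rw [← hqp, ← Category.assoc, hg.1, zero_comp]
  obtain ⟨h', hh', -⟩ := hu.2 g hgj
  have h7 : g ≫ inv x = 0 := by rw [← hh', Category.assoc, h6, comp_zero]
  obtain ⟨h, hh, -⟩ := hg.2 (inv x) h7
  have hx2 : x = inv h ≫ inv q := by
    rw [← my_inv_comp hinv, hh, my_inv_inv hinv]
  have hq2 : inv q ≫ q ≫ inv q = inv q := (hinv q).1.2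
  rw [hx2, ← hqp, hpinv, Category.assoc, hq2]

lemma my_main (hinv : IsInverseOp inv) (hC : IsExactCategory C)
    (Bs : BaerStar C inv) {A B : C} (f : A ⟶ B) :
    (∀ j : B ⟶ B, IsProjection inv j →
        Bs.prj (f ≫ Bs.prj j) = inv (inv f) ≫ j ≫ inv f) ↔ f ≫ inv f = 𝟙 A := by
  constructor
  · intro H
    have h1 := H (𝟙 B) ⟨Category.id_comp _, my_inv_id hinv B⟩
    rw [my_prj_id hinv Bs, comp_zero, my_prj_zero hinv Bs, my_inv_inv hinv,
      Category.id_comp] at h1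
    exact h1.symm
  · intro hf j hj
    rw [my_inv_inv hinv]
    symm
    apply my_prj_unique hinv Bs (f ≫ Bs.prj j) (my_proj_conj hinv f hj)
    · -- (f ≫ j ≫ inv f) ≫ (f ≫ Bs.prj j) = 0
      have hjk : j ≫ Bs.prj j = 0 := by
        have hj2 : inv j = j := hj.2
        have hprj2 : inv (Bs.prj j) = Bs.prj j := (Bs.prj_isProjection j).2
        have h : inv (Bs.prj j ≫ j) = inv (0 : B ⟶ B) := by
          rw [my_prj_comp_zero Bs j]
        rw [my_inv_comp hinv, hj2, hprj2, my_inv_zero hinv] at h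
        exact h
      calc (f ≫ j ≫ inv f) ≫ (f ≫ Bs.prj j)
          = f ≫ (j ≫ (inv f ≫ f)) ≫ Bs.prj j := by simp only [Category.assoc]
        _ = f ≫ ((inv f ≫ f) ≫ j) ≫ Bs.prj j := by
            rw [my_idem_comm hinv hj.1 (my_idem_if hinv f)]
        _ = f ≫ (inv f ≫ f) ≫ (j ≫ Bs.prj j) := by simp only [Category.assoc]
        _ = 0 := by rw [hjk, comp_zero, comp_zero]
    · intro X x hx
      have hx' : (x ≫ f) ≫ Bs.prj j = 0 := by rw [Category.assoc]; exact hx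
      have h8 : (x ≫ f) ≫ j = x ≫ f := my_compl hinv hC Bs hj (x ≫ f) hx'
      calc x ≫ f ≫ j ≫ inv f = ((x ≫ f) ≫ j) ≫ inv f := by simp only [Category.assoc]
        _ = (x ≫ f) ≫ inv f := by rw [h8]
        _ = x ≫ (f ≫ inv f) := by rw [Category.assoc]
        _ = x := by rw [hf, Category.comp_id]

end Baer

end Aux

/-- In an exact inverse category, `P′(f) = P(f*)` iff `f` is a
monomorphism, and `P(f) = P′(f*)` iff `f` is an epimorphism. -/
theorem stmt16 [HasZeroObject C] [HasZeroMorphisms C] (inv : MorphismOp C)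
    (hinv : IsInverseOp inv) (hC : IsExactCategory C) (Bs : BaerStar C inv)
    {A B : C} (f : A ⟶ B) :
    ((∀ j : B ⟶ B, IsProjection inv j →
        Bs.prj (f ≫ Bs.prj j) = inv (inv f) ≫ j ≫ inv f) ↔ Mono f) ∧
    ((∀ i : A ⟶ A, IsProjection inv i →
        inv f ≫ i ≫ f = Bs.prj (inv f ≫ Bs.prj i)) ↔ Epi f) := by
  constructor
  · exact (my_main hinv hC Bs f).trans (my_mono_iff hinv f).symm
  · have h := my_main hinv hC Bs (inv f)
    simp only [my_inv_inv hinv] at h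
    rw [my_epi_iff hinv f]
    exact ⟨fun H => h.1 fun i hi => (H i hi).symm, fun H i hi => (h.2 H i hi).symm⟩
end
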